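/- Let (A, R) and (B, L) be Noetherian confluent MRS with nf_L a normal-form function for (B, L), and let φ : (A, R) → (B, L) be an MRS-homomorphism. Then for every list l of elements of A, nf_L (φ (l.prod)) = nf_L ((l.map (fun a => nf_L (φ a))).prod); in particular φ applied to a product of elements is ↔_L*-equivalent to the product of the normal forms of their images (this is the 2-cell φ ∘ ε_A ⇒ ε_B ∘ GIφ of the counit's strong naturality). -/
import Mathlib


namespace MRS

/-- One-step rewriting relation of an MRS `(M, R)`. -/
def Step {M : Type*} [Monoid M] (R : M → M → Prop) (a b : M) : Prop :=
  ∃ x y s t : M, a = x * s * y ∧ b = x * t * y ∧ R s t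

/-- An element is irreducible for a relation if it only rewrites to itself. -/
def IrredRel {α : Type*} (r : α → α → Prop) (a : α) : Prop :=
  ∀ b, r a b → a = b

/-- A relation is Noetherian if there is no infinite chain of non-trivial steps. -/
def NoetherianRel {α : Type*} (r : α → α → Prop) : Prop :=
  ¬ ∃ f : ℕ → α, ∀ n, r (f n) (f (n + 1)) ∧ f n ≠ f (n + 1)

/-- Confluence of a relation. -/
def ConfluentRel {α : Type*} (r : α → α → Prop) : Prop :=
  ∀ u a b : α, Relation.ReflTransGen r u a → Relation.ReflTransGen r u b →
    ∃ c, Relation.ReflTransGen r a c ∧ Relation.ReflTransGen r b c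

/-- `nf` is a normal-form function for the MRS `(M, R)`. -/
def IsNF {M : Type*} [Monoid M] (R : M → M → Prop) (nf : M → M) : Prop :=
  ∀ u, Relation.ReflTransGen (Step R) u (nf u) ∧ IrredRel (Step R) (nf u)

end MRS


open MRS in
lemma step_mul_left {M : Type*} [Monoid M] {L : M → M → Prop} (x : M) {a b : M}
    (h : Step L a b) : Step L (x * a) (x * b) := by
  obtain ⟨p, q, s, t, ha, hb, hst⟩ := h
  exact ⟨x * p, q, s, t, by rw [ha]; simp [mul_assoc],
    by rw [hb]; simp [mul_assoc], hst⟩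

open MRS in
lemma step_mul_right {M : Type*} [Monoid M] {L : M → M → Prop} (y : M) {a b : M}
    (h : Step L a b) : Step L (a * y) (b * y) := by
  obtain ⟨p, q, s, t, ha, hb, hst⟩ := h
  exact ⟨p, q * y, s, t, by rw [ha]; simp [mul_assoc], by rw [hb]; simp [mul_assoc], hst⟩

open MRS in
lemma rtg_mul {M : Type*} [Monoid M] {L : M → M → Prop} {a b c d : M}
    (h1 : Relation.ReflTransGen (Step L) a b) (h2 : Relation.ReflTransGen (Step L) c d) :
    Relation.ReflTransGen (Step L) (a * c) (b * d) := by
  have l1 : Relation.ReflTransGen (Step L) (a * c) (b * c) := by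
    induction h1 with
    | refl => exact .refl
    | tail _ h ih => exact ih.tail (step_mul_right c h)
  have l2 : Relation.ReflTransGen (Step L) (b * c) (b * d) := by
    induction h2 with
    | refl => exact .refl
    | tail _ h ih => exact ih.tail (step_mul_left b h)
  exact l1.trans l2

open MRS in
lemma irred_rtg {M : Type*} {r : M → M → Prop} {a b : M} (hi : IrredRel r a)
    (h : Relation.ReflTransGen r a b) : a = b := by
  induction h with
  | refl => rfl
  | tail hab h ih => exact ih.trans (ih ▸ hi _ (ih ▸ h))

open MRS in
lemma nf_eq_of_rtg {M : Type*} [Monoid M] {L : M → M → Prop}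
    (hConf : ConfluentRel (Step L)) {nfL : M → M} (hnfL : IsNF L nfL) {u v : M}
    (h : Relation.ReflTransGen (Step L) u v) : nfL u = nfL v := by
  obtain ⟨c, hc1, hc2⟩ := hConf u (nfL u) (nfL v) (hnfL u).1 (h.trans (hnfL v).1)
  exact (irred_rtg (hnfL u).2 hc1).trans (irred_rtg (hnfL v).2 hc2).symm

open MRS
/-- For an MRS-homomorphism `φ` and a list `l` of elements of `A`,
`nf_L (φ (l.prod)) = nf_L ((l.map (fun a => nf_L (φ a))).prod)`. -/
theorem stmt_11 {A B : Type*} [Monoid A] [Monoid B]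
    (R : A → A → Prop) (L : B → B → Prop)
    (hNoethR : NoetherianRel (Step R)) (hConfR : ConfluentRel (Step R))
    (hNoethL : NoetherianRel (Step L)) (hConfL : ConfluentRel (Step L))
    (nfL : B → B) (hnfL : IsNF L nfL)
    (φ : A →* B)
    (hφ : ∀ u v : A, R u v → Relation.ReflTransGen (Step L) (φ u) (φ v)) :
    ∀ l : List A, nfL (φ l.prod) = nfL ((l.map (fun a => nfL (φ a))).prod) := by
  intro l
  apply nf_eq_of_rtg hConfL hnfL
  induction l with
  | nil => simp; exact .refl
  | cons a l ih =>
    simp only [List.prod_cons, List.map_cons, map_mul]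
    exact rtg_mul (hnfL (φ a)).1 ih
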